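/- If S is a subtractive principal ideal semidomain, then S is a Gaussian semiring, i.e., c(fg) = c(f)c(g) for all polynomials f, g ∈ S[X], where c(f) denotes the ideal of S generated by the coefficients of f. -/

import Mathlib

open Polynomial Ideal

/-- The content of a polynomial over a semiring: the ideal generated by its coefficients. -/
def semiringContent {S : Type*} [CommSemiring S] (f : Polynomial S) : Ideal S :=
  Ideal.span (Set.range f.coeff)

section Aux

variable {S : Type*} [CommSemiring S]

lemma coeff_mem_semiringContent (f : Polynomial S) (i : ℕ) :
    f.coeff i ∈ semiringContent f :=
  Ideal.subset_span ⟨i, rfl⟩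

lemma semiringContent_le_iff {f : Polynomial S} {I : Ideal S} :
    semiringContent f ≤ I ↔ ∀ i, f.coeff i ∈ I := by
  rw [semiringContent, Ideal.span_le]
  constructor
  · intro h i; exact h ⟨i, rfl⟩
  · rintro h x ⟨i, rfl⟩; exact h i

lemma semiringContent_zero : semiringContent (0 : Polynomial S) = ⊥ := by
  apply le_antisymm
  · rw [semiringContent_le_iff]; intro i; simp
  · exact bot_le

lemma semiringContent_C_mul (a : S) (f : Polynomial S) :
    semiringContent (Polynomial.C a * f) = Ideal.span {a} * semiringContent f := by
  apply le_antisymm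
  · rw [semiringContent_le_iff]
    intro i
    rw [Polynomial.coeff_C_mul]
    exact Ideal.mul_mem_mul (Ideal.mem_span_singleton_self a) (coeff_mem_semiringContent f i)
  · rw [Ideal.span_singleton_mul_le_iff]
    intro z hz
    induction hz using Submodule.span_induction with
    | mem x hx =>
        obtain ⟨i, rfl⟩ := hx
        rw [← Polynomial.coeff_C_mul]
        exact coeff_mem_semiringContent _ i
    | zero => rw [mul_zero]; exact Ideal.zero_mem _
    | add x y _ _ hx hy => rw [mul_add]; exact Ideal.add_mem _ hx hy
    | smul r x _ hx =>
        rw [smul_eq_mul, mul_left_comm]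
        exact Ideal.mul_mem_left _ _ hx

lemma span_singleton_cancel [IsCancelMulZero S] {a : S} (ha : a ≠ 0)
    {I J : Ideal S} (h : Ideal.span {a} * I = Ideal.span {a} * J) : I = J := by
  have key : ∀ {I J : Ideal S}, Ideal.span {a} * I ≤ Ideal.span {a} * J → I ≤ J := by
    intro I J hIJ x hx
    have hax : a * x ∈ Ideal.span {a} * J :=
      hIJ (Ideal.mul_mem_mul (Ideal.mem_span_singleton_self a) hx)
    obtain ⟨z, hz, haz⟩ := Ideal.mem_span_singleton_mul.mp hax
    rwa [mul_left_cancel₀ ha haz] at hz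
  exact le_antisymm (key h.le) (key h.ge)

/-- A product of primitive polynomials over a subtractive semiring is primitive. -/
lemma primitive_mul_primitive
    (hsub : ∀ (I : Ideal S) (a b : S), a + b ∈ I → a ∈ I → b ∈ I)
    {f g : Polynomial S} (hf : semiringContent f = ⊤) (hg : semiringContent g = ⊤) :
    semiringContent (f * g) = ⊤ := by
  classical
  by_contra h
  obtain ⟨M, hM, hle⟩ := Ideal.exists_le_maximal _ h
  have hfex : ∃ i, f.coeff i ∉ M := by
    by_contra hc
    push_neg at hc
    exact hM.ne_top (top_le_iff.mp (hf ▸ semiringContent_le_iff.mpr hc))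
  have hgex : ∃ j, g.coeff j ∉ M := by
    by_contra hc
    push_neg at hc
    exact hM.ne_top (top_le_iff.mp (hg ▸ semiringContent_le_iff.mpr hc))
  set i := Nat.find hfex with hidef
  set j := Nat.find hgex with hjdef
  have hi : f.coeff i ∉ M := Nat.find_spec hfex
  have hj : g.coeff j ∉ M := Nat.find_spec hgex
  have hi' : ∀ k, k < i → f.coeff k ∈ M := fun k hk => not_not.mp (Nat.find_min hfex hk)
  have hj' : ∀ k, k < j → g.coeff k ∈ M := fun k hk => not_not.mp (Nat.find_min hgex hk)
  -- the coefficient of f*g at i+j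
  have hij : (i, j) ∈ Finset.HasAntidiagonal.antidiagonal (i + j) := by simp
  have hsum : f.coeff i * g.coeff j
      + ∑ x ∈ (Finset.HasAntidiagonal.antidiagonal (i + j)).erase (i, j), f.coeff x.1 * g.coeff x.2
      = (f * g).coeff (i + j) := by
    rw [Polynomial.coeff_mul]
    exact Finset.add_sum_erase _ (fun x => f.coeff x.1 * g.coeff x.2) hij
  have hrest : ∑ x ∈ (Finset.HasAntidiagonal.antidiagonal (i + j)).erase (i, j),
      f.coeff x.1 * g.coeff x.2 ∈ M := by
    apply Ideal.sum_mem
    rintro ⟨k, l⟩ hkl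
    obtain ⟨hne, hmem⟩ := Finset.mem_erase.mp hkl
    rw [Finset.HasAntidiagonal.mem_antidiagonal] at hmem
    rcases lt_trichotomy k i with hk | hk | hk
    · exact Ideal.mul_mem_right _ _ (hi' k hk)
    · exfalso; apply hne; subst hk
      have : l = j := by omega
      rw [this]
    · have : l < j := by omega
      exact Ideal.mul_mem_left _ _ (hj' l this)
  have htot : f.coeff i * g.coeff j
      + ∑ x ∈ (Finset.HasAntidiagonal.antidiagonal (i + j)).erase (i, j), f.coeff x.1 * g.coeff x.2 ∈ M := by
    rw [hsum]
    exact hle (coeff_mem_semiringContent _ _)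
  have hprod : f.coeff i * g.coeff j ∈ M := by
    apply hsub M _ _ _ hrest
    rwa [add_comm]
  rcases hM.isPrime.mem_or_mem hprod with hc | hc
  · exact hi hc
  · exact hj hc

/-- Factor out the content generator of a polynomial. -/
lemma exists_C_mul_factor {a : S} {f : Polynomial S}
    (hf : semiringContent f = Ideal.span {a}) :
    ∃ f₁ : Polynomial S, f = Polynomial.C a * f₁ := by
  classical
  have hdvd : ∀ i, a ∣ f.coeff i := fun i =>
    Ideal.mem_span_singleton.mp (hf ▸ coeff_mem_semiringContent f i)
  choose q hq using hdvd
  refine ⟨∑ i ∈ f.support, Polynomial.C (q i) * Polynomial.X ^ i, ?_⟩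
  rw [Finset.mul_sum]
  conv_lhs => rw [f.as_sum_support_C_mul_X_pow]
  refine Finset.sum_congr rfl fun i _ => ?_
  rw [← mul_assoc, ← Polynomial.C_mul, ← hq i]

end Aux

/-- A subtractive principal ideal semidomain is Gaussian:
c(fg) = c(f)c(g) for all polynomials f,g. -/
theorem subtractive_PISD_gaussian {S : Type*} [CommSemiring S] [Nontrivial S] [IsCancelMulZero S]
    (hsub : ∀ (I : Ideal S) (a b : S), a + b ∈ I → a ∈ I → b ∈ I)
    (hpis : ∀ I : Ideal S, ∃ a : S, I = Ideal.span {a})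
    (f g : Polynomial S) :
    semiringContent (f * g) = semiringContent f * semiringContent g := by
  rcases eq_or_ne f 0 with rfl | hf
  · rw [zero_mul, semiringContent_zero, bot_mul]
  rcases eq_or_ne g 0 with rfl | hg
  · rw [mul_zero, semiringContent_zero, mul_bot]
  obtain ⟨a, ha⟩ := hpis (semiringContent f)
  obtain ⟨b, hb⟩ := hpis (semiringContent g)
  have ha0 : a ≠ 0 := by
    rintro rfl
    apply hf
    ext i
    have hbot : semiringContent f = ⊥ := by rw [ha]; simp
    have h1 := coeff_mem_semiringContent f i
    rw [hbot] at h1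
    simpa using h1
  have hb0 : b ≠ 0 := by
    rintro rfl
    apply hg
    ext i
    have hbot : semiringContent g = ⊥ := by rw [hb]; simp
    have h1 := coeff_mem_semiringContent g i
    rw [hbot] at h1
    simpa using h1
  obtain ⟨f₁, rfl⟩ := exists_C_mul_factor ha
  obtain ⟨g₁, rfl⟩ := exists_C_mul_factor hb
  have hf₁ : semiringContent f₁ = ⊤ := by
    apply span_singleton_cancel ha0
    rw [← semiringContent_C_mul, ha, mul_top]
  have hg₁ : semiringContent g₁ = ⊤ := by
    apply span_singleton_cancel hb0
    rw [← semiringContent_C_mul, hb, mul_top]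
  have hfg : Polynomial.C a * f₁ * (Polynomial.C b * g₁)
      = Polynomial.C a * (Polynomial.C b * (f₁ * g₁)) := by ring
  rw [hfg, semiringContent_C_mul, semiringContent_C_mul,
    primitive_mul_primitive hsub hf₁ hg₁, mul_top, ha, hb]
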